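/- Let 𝕂 be a field, r ≥ 1, and let H be a finite-dimensional 𝕂-linear subspace of the polynomial ring 𝕂[x₁,…,x_r]. Let G = (V,E) be a finite simple graph that admits a representation over H, i.e., assignments v ↦ f_v ∈ H and v ↦ c_v ∈ 𝕂^r such that f_v(c_v) ≠ 0 for every v ∈ V, and f_u(c_v) = 0 for every pair of distinct non-adjacent vertices u, v ∈ V. Then the Shannon capacity satisfies c(G) ≤ dim_𝕂 H. -/

import Mathlib

/-- The `k`-th strong power of a simple graph: vertices are `k`-tuples, and two distinct
tuples are adjacent iff in each coordinate the entries are equal or adjacent. -/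
def gStrongPow {α : Type*} (G : SimpleGraph α) (k : ℕ) :
    SimpleGraph (Fin k → α) where
  Adj u v := u ≠ v ∧ ∀ i, u i = v i ∨ G.Adj (u i) (v i)
  symm := ⟨by
    rintro u v ⟨hne, h⟩
    exact ⟨hne.symm, fun i => (h i).imp Eq.symm (fun h' => G.adj_symm h')⟩⟩
  loopless := ⟨fun u h => h.1 rfl⟩
/-- The independence number of a graph on a finite vertex type: the maximum size of a
set of pairwise non-adjacent vertices. -/
noncomputable def gIndepNum {α : Type*} [Fintype α] (G : SimpleGraph α) : ℕ :=
  sSup {n | ∃ s : Finset α, s.card = n ∧ (s : Set α).Pairwise (fun a b => ¬ G.Adj a b)}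
/-- The Shannon capacity `c(G) = sup_{k ≥ 1} α(G^k)^(1/k)`. -/
noncomputable def gShannonCapacity {α : Type*} [Fintype α] (G : SimpleGraph α) : ℝ :=
  ⨆ k : ℕ, (gIndepNum (gStrongPow G (k + 1)) : ℝ) ^ ((1 : ℝ) / (k + 1))

/-- Evaluation of multivariate polynomials as a linear map into functions. -/
noncomputable def gEvalL (𝕂 : Type*) [Field 𝕂] (r : ℕ) :
    MvPolynomial (Fin r) 𝕂 →ₗ[𝕂] ((Fin r → 𝕂) → 𝕂) where
  toFun p x := MvPolynomial.eval x p
  map_add' p q := funext fun x => by simp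
  map_smul' a p := funext fun x => by simp [MvPolynomial.smul_eval]

/-- Key counting lemma: any independent set in the `k`-th strong power has size at
most `(dim H)^k`. -/
lemma gIndep_card_le_pow
    {𝕂 : Type*} [Field 𝕂] {r : ℕ}
    (H : Submodule 𝕂 (MvPolynomial (Fin r) 𝕂)) [FiniteDimensional 𝕂 H]
    {V : Type*} [Fintype V] (G : SimpleGraph V)
    (f : V → MvPolynomial (Fin r) 𝕂) (c : V → Fin r → 𝕂)
    (hfH : ∀ v, f v ∈ H)
    (hdiag : ∀ v, MvPolynomial.eval (c v) (f v) ≠ 0)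
    (hoff : ∀ u v, u ≠ v → ¬ G.Adj u v → MvPolynomial.eval (c v) (f u) = 0)
    (k : ℕ) (s : Finset (Fin k → V))
    (hs : (s : Set (Fin k → V)).Pairwise (fun a b => ¬ (gStrongPow G k).Adj a b)) :
    s.card ≤ (Module.finrank 𝕂 H) ^ k := by
  classical
  set Φ := gEvalL 𝕂 r with hΦ
  set E := H.map Φ with hE
  haveI : FiniteDimensional 𝕂 E := Module.Finite.map H Φ
  set d' := Module.finrank 𝕂 E with hd'
  let b : Module.Basis (Fin d') 𝕂 E := Module.finBasis 𝕂 E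
  let ev : V → E := fun v => ⟨Φ (f v), Submodule.mem_map_of_mem (hfH v)⟩
  let a : V → Fin d' → 𝕂 := fun v => b.repr (ev v)
  have hrep : ∀ v (x : Fin r → 𝕂),
      MvPolynomial.eval x (f v) = ∑ j, a v j * (b j : (Fin r → 𝕂) → 𝕂) x := by
    intro v x
    have h1 : ∑ j, a v j • b j = ev v := b.sum_repr (ev v)
    have h2 : ((∑ j, a v j • b j : E) : (Fin r → 𝕂) → 𝕂) = Φ (f v) := by
      rw [h1]
    have h3 : ((∑ j, a v j • b j : E) : (Fin r → 𝕂) → 𝕂)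
        = ∑ j, a v j • ((b j : (Fin r → 𝕂) → 𝕂)) := by
      push_cast
      rfl
    have := congrFun (h3 ▸ h2) x
    simp only [Finset.sum_apply, Pi.smul_apply, smul_eq_mul] at this
    simpa [Φ, gEvalL] using this.symm
  -- the product functions
  let F : (Fin k → V) → ((Fin k → Fin r → 𝕂) → 𝕂) :=
    fun u x => ∏ i, MvPolynomial.eval (x i) (f (u i))
  let P : (Fin k → Fin d') → ((Fin k → Fin r → 𝕂) → 𝕂) :=
    fun J x => ∏ i, (b (J i) : (Fin r → 𝕂) → 𝕂) (x i)
  let W := Submodule.span 𝕂 (Set.range P)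
  haveI : FiniteDimensional 𝕂 W := FiniteDimensional.span_of_finite 𝕂 (Set.finite_range P)
  have hFW : ∀ u, F u ∈ W := by
    intro u
    have hFu : F u = ∑ J : Fin k → Fin d', (∏ i, a (u i) (J i)) • P J := by
      funext x
      have h1 : F u x = ∏ i, ∑ j, a (u i) j * (b j : (Fin r → 𝕂) → 𝕂) (x i) := by
        simp only [F]
        exact Finset.prod_congr rfl fun i _ => hrep (u i) (x i)
      rw [h1, Finset.prod_univ_sum]
      rw [Fintype.piFinset_univ]
      simp only [Finset.sum_apply, Pi.smul_apply, smul_eq_mul, P]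
      exact Finset.sum_congr rfl fun J _ => (Finset.prod_mul_distrib)
    rw [hFu]
    exact Submodule.sum_mem _ fun J _ =>
      Submodule.smul_mem _ _ (Submodule.subset_span ⟨J, rfl⟩)
  -- linear independence of the restricted family
  have hoffF : ∀ u v : ↥s, u ≠ v → F u (fun i => c (v.1 i)) = 0 := by
    rintro ⟨u, hu⟩ ⟨v, hv⟩ huv
    have hne : u ≠ v := fun h => huv (Subtype.ext h)
    have hnadj : ¬ (gStrongPow G k).Adj u v := hs hu hv hne
    simp only [gStrongPow, ne_eq] at hnadj
    push_neg at hnadj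
    obtain ⟨i, hi⟩ := hnadj hne
    exact Finset.prod_eq_zero (Finset.mem_univ i) (hoff _ _ hi.1 hi.2)
  have hdiagF : ∀ v : ↥s, F v (fun i => c (v.1 i)) ≠ 0 := by
    intro v
    exact Finset.prod_ne_zero_iff.2 fun i _ => hdiag (v.1 i)
  have hli : LinearIndependent 𝕂 (fun u : ↥s => F u) := by
    rw [Fintype.linearIndependent_iff]
    intro g hg v
    have := congrFun hg (fun i => c (v.1 i))
    simp only [Finset.sum_apply, Pi.smul_apply, smul_eq_mul, Pi.zero_apply] at this
    rw [Finset.sum_eq_single v (fun u _ hu => by rw [hoffF u v hu, mul_zero])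
      (fun h => absurd (Finset.mem_univ v) h)] at this
    exact (mul_eq_zero.1 this).resolve_right (hdiagF v)
  have hliW : LinearIndependent 𝕂 (fun u : ↥s => (⟨F u, hFW u⟩ : W)) := by
    apply LinearIndependent.of_comp W.subtype
    exact hli
  have hcard : s.card ≤ Module.finrank 𝕂 W := by
    rw [← Fintype.card_coe]
    exact hliW.fintype_card_le_finrank
  have hW : Module.finrank 𝕂 W ≤ d' ^ k := by
    calc Module.finrank 𝕂 W ≤ (Set.range P).toFinset.card := finrank_span_le_card _
      _ ≤ Fintype.card (Fin k → Fin d') := by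
          rw [Set.toFinset_range]
          exact (Finset.card_image_le).trans (le_of_eq (Finset.card_univ))
      _ = d' ^ k := by simp [Fintype.card_fun]
  have hd : d' ≤ Module.finrank 𝕂 H := Submodule.finrank_map_le Φ H
  exact hcard.trans (hW.trans (Nat.pow_le_pow_left hd k))

theorem shannonCapacity_le_finrank_of_representation
    {𝕂 : Type*} [Field 𝕂] (r : ℕ) (hr : 1 ≤ r)
    (H : Submodule 𝕂 (MvPolynomial (Fin r) 𝕂)) [FiniteDimensional 𝕂 H]
    {V : Type*} [Fintype V] (G : SimpleGraph V)
    (f : V → MvPolynomial (Fin r) 𝕂) (c : V → Fin r → 𝕂)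
    (hfH : ∀ v, f v ∈ H)
    (hdiag : ∀ v, MvPolynomial.eval (c v) (f v) ≠ 0)
    (hoff : ∀ u v, u ≠ v → ¬ G.Adj u v → MvPolynomial.eval (c v) (f u) = 0) :
    gShannonCapacity G ≤ (Module.finrank 𝕂 H : ℝ) := by
  set d := Module.finrank 𝕂 H with hd
  apply ciSup_le
  intro k
  have hα : gIndepNum (gStrongPow G (k + 1)) ≤ d ^ (k + 1) := by
    apply csSup_le'
    rintro n ⟨s, hcard, hpair⟩
    exact hcard ▸ gIndep_card_le_pow H G f c hfH hdiag hoff (k + 1) s hpair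
  have hd0 : (0 : ℝ) ≤ (d : ℝ) := Nat.cast_nonneg d
  have h1 : ((gIndepNum (gStrongPow G (k + 1)) : ℝ)) ^ ((1 : ℝ) / (k + 1))
      ≤ ((d : ℝ) ^ (k + 1 : ℕ)) ^ ((1 : ℝ) / (k + 1)) := by
    apply Real.rpow_le_rpow (Nat.cast_nonneg _)
    · exact_mod_cast hα
    · positivity
  refine h1.trans (le_of_eq ?_)
  rw [← Real.rpow_natCast (d : ℝ) (k + 1), ← Real.rpow_mul hd0]
  have : ((k + 1 : ℕ) : ℝ) * ((1 : ℝ) / (k + 1)) = 1 := by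
    push_cast
    field_simp
  rw [this, Real.rpow_one]
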